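/- For k = 1, 2 let θ_k = (τ_{Z,k}, φ_{Z,k}, φ_{U,k}, ρ_k) be real parameters with τ_{Z,k} > 0, |φ_{Z,k}| < 1, |φ_{U,k}| < 1, ρ_k > 0, and φ_{U,k} ≠ 0, and define the lag function p_k : ℕ → ℝ by p_k(0) = τ_{Z,k}·[2 − 2ρ_k²/√(1−φ_{U,k}²)], p_k(1) = τ_{Z,k}·[−φ_{Z,k} − 2ρ_k²·φ_{U,k}/(√(1−φ_{U,k}²)·(1+√(1−φ_{U,k}²)))], and p_k(l) = −2·τ_{Z,k}·ρ_k²·φ_{U,k}^l/(√(1−φ_{U,k}²)·(1+√(1−φ_{U,k}²))^l) for l ≥ 2. If p_1(l) = p_2(l) for all l ∈ ℕ, then τ_{Z,1} = τ_{Z,2}, φ_{Z,1} = φ_{Z,2}, φ_{U,1} = φ_{U,2}, and ρ_1 = ρ_2. -/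

import Mathlib

/-- The limiting value, as ring size `n → ∞`, of the entries at lag `l = |i - j|` of the
marginal precision matrix `τ_Z • (A_n(φ_Z) - 4ρ² • A_n(φ_U)⁻¹)` of the exposure. -/
noncomputable def lagPrec (τZ φZ φU ρ : ℝ) : ℕ → ℝ := fun l =>
  if l = 0 then
    τZ * (2 - 2 * ρ ^ 2 / Real.sqrt (1 - φU ^ 2))
  else if l = 1 then
    τZ * (-φZ - 2 * ρ ^ 2 * φU /
      (Real.sqrt (1 - φU ^ 2) * (1 + Real.sqrt (1 - φU ^ 2))))
  else
    -2 * τZ * ρ ^ 2 * φU ^ l /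
      (Real.sqrt (1 - φU ^ 2) * (1 + Real.sqrt (1 - φU ^ 2)) ^ l)

/-- Second assertion of Theorem 1: when `ρ > 0` and `φ_U ≠ 0`, the parameters
`(τ_Z, φ_Z, φ_U, ρ)` are identified by the limiting precision of the exposure process. -/
theorem parameters_identified_from_exposure
    (τZ1 φZ1 φU1 ρ1 τZ2 φZ2 φU2 ρ2 : ℝ)
    (hτZ1 : 0 < τZ1) (hφZ1 : |φZ1| < 1) (hφU1 : |φU1| < 1) (hρ1 : 0 < ρ1) (hU1 : φU1 ≠ 0)
    (hτZ2 : 0 < τZ2) (hφZ2 : |φZ2| < 1) (hφU2 : |φU2| < 1) (hρ2 : 0 < ρ2) (hU2 : φU2 ≠ 0)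
    (heq : ∀ l : ℕ, lagPrec τZ1 φZ1 φU1 ρ1 l = lagPrec τZ2 φZ2 φU2 ρ2 l) :
    τZ1 = τZ2 ∧ φZ1 = φZ2 ∧ φU1 = φU2 ∧ ρ1 = ρ2 := by
  have h1 : (0:ℝ) < 1 - φU1 ^ 2 := by
    have := abs_lt.mp hφU1; nlinarith
  have h2 : (0:ℝ) < 1 - φU2 ^ 2 := by
    have := abs_lt.mp hφU2; nlinarith
  set s1 := Real.sqrt (1 - φU1 ^ 2) with hs1def
  set s2 := Real.sqrt (1 - φU2 ^ 2) with hs2def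
  have hs1 : 0 < s1 := Real.sqrt_pos.mpr h1
  have hs2 : 0 < s2 := Real.sqrt_pos.mpr h2
  have hs1sq : s1 ^ 2 = 1 - φU1 ^ 2 := Real.sq_sqrt h1.le
  have hs2sq : s2 ^ 2 = 1 - φU2 ^ 2 := Real.sq_sqrt h2.le
  have hd1 : (0:ℝ) < 1 + s1 := by linarith
  have hd2 : (0:ℝ) < 1 + s2 := by linarith
  set c1 := -2 * τZ1 * ρ1 ^ 2 / s1 with hc1def
  set c2 := -2 * τZ2 * ρ2 ^ 2 / s2 with hc2def
  set r1 := φU1 / (1 + s1) with hr1def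
  set r2 := φU2 / (1 + s2) with hr2def
  have hc1 : c1 ≠ 0 := by
    rw [hc1def]
    apply ne_of_lt
    apply div_neg_of_neg_of_pos _ hs1
    nlinarith [mul_pos hτZ1 (pow_pos hρ1 2)]
  have hc2 : c2 ≠ 0 := by
    rw [hc2def]
    apply ne_of_lt
    apply div_neg_of_neg_of_pos _ hs2
    nlinarith [mul_pos hτZ2 (pow_pos hρ2 2)]
  have hr1 : r1 ≠ 0 := div_ne_zero hU1 (ne_of_gt hd1)
  have hr2 : r2 ≠ 0 := div_ne_zero hU2 (ne_of_gt hd2)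
  have lag1 : ∀ l : ℕ, -(2 * τZ1 * ρ1 ^ 2 * φU1 ^ l) / (s1 * (1 + s1) ^ l) = c1 * r1 ^ l := by
    intro l
    rw [hc1def, hr1def, div_pow, div_mul_div_comm]
    ring_nf
  have lag2 : ∀ l : ℕ, -(2 * τZ2 * ρ2 ^ 2 * φU2 ^ l) / (s2 * (1 + s2) ^ l) = c2 * r2 ^ l := by
    intro l
    rw [hc2def, hr2def, div_pow, div_mul_div_comm]
    ring_nf
  have e2 := heq 2
  have e3 := heq 3
  simp only [lagPrec, ← hs1def, ← hs2def] at e2 e3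
  norm_num at e2 e3
  rw [lag1 2, lag2 2] at e2
  rw [lag1 3, lag2 3] at e3
  -- r1 = r2
  have hrr : r1 = r2 := by
    have key : r1 * (c1 * r1 ^ 2) = r2 * (c1 * r1 ^ 2) := by
      calc r1 * (c1 * r1 ^ 2) = c1 * r1 ^ 3 := by ring
        _ = c2 * r2 ^ 3 := e3
        _ = r2 * (c2 * r2 ^ 2) := by ring
        _ = r2 * (c1 * r1 ^ 2) := by rw [← e2]
    exact mul_right_cancel₀ (mul_ne_zero hc1 (pow_ne_zero 2 hr1)) key
  have hcc : c1 = c2 := by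
    rw [hrr] at e2
    exact mul_right_cancel₀ (pow_ne_zero 2 hr2) e2
  -- φU1 = φU2
  have id1 : φU1 * (1 + r1 ^ 2) = 2 * r1 := by
    rw [hr1def]
    field_simp
    linear_combination hs1sq
  have id2 : φU2 * (1 + r2 ^ 2) = 2 * r2 := by
    rw [hr2def]
    field_simp
    linear_combination hs2sq
  have hφU : φU1 = φU2 := by
    have h : φU1 * (1 + r1 ^ 2) = φU2 * (1 + r1 ^ 2) := by
      rw [id1, hrr, id2]
    have hpos : (1 + r1 ^ 2) ≠ 0 := by positivity
    exact mul_right_cancel₀ hpos h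
  have hss : s1 = s2 := by rw [hs1def, hs2def, hφU]
  -- τZ1 * ρ1^2 = τZ2 * ρ2^2
  have hmul : τZ1 * ρ1 ^ 2 = τZ2 * ρ2 ^ 2 := by
    rw [hc1def, hc2def, hss] at hcc
    have h := congrArg (fun x => x * s2) hcc
    simp only [div_mul_cancel₀ _ (ne_of_gt hs2)] at h
    linarith
  -- τZ1 = τZ2
  have e0 := heq 0
  simp only [lagPrec, ← hs1def, ← hs2def] at e0
  norm_num at e0
  have hτ : τZ1 = τZ2 := by
    rw [hss] at e0
    have e0s : (τZ1 * (2 - 2 * ρ1 ^ 2 / s2)) * s2 = (τZ2 * (2 - 2 * ρ2 ^ 2 / s2)) * s2 := by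
      rw [e0]
    have expand1 : (τZ1 * (2 - 2 * ρ1 ^ 2 / s2)) * s2 = 2 * (τZ1 * s2) - 2 * (τZ1 * ρ1 ^ 2) := by
      field_simp
    have expand2 : (τZ2 * (2 - 2 * ρ2 ^ 2 / s2)) * s2 = 2 * (τZ2 * s2) - 2 * (τZ2 * ρ2 ^ 2) := by
      field_simp
    rw [expand1, expand2] at e0s
    have hts : τZ1 * s2 = τZ2 * s2 := by linarith
    exact mul_right_cancel₀ (ne_of_gt hs2) hts
  -- ρ1 = ρ2
  have hρ : ρ1 = ρ2 := by
    have hsq : ρ1 ^ 2 = ρ2 ^ 2 := by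
      rw [hτ] at hmul
      exact mul_left_cancel₀ (ne_of_gt hτZ2) hmul
    exact (pow_left_inj₀ hρ1.le hρ2.le two_ne_zero).mp hsq
  -- φZ1 = φZ2
  have e1 := heq 1
  simp only [lagPrec, ← hs1def, ← hs2def] at e1
  norm_num at e1
  have hφZ : φZ1 = φZ2 := by
    rw [hτ, hρ, hφU, hss] at e1
    have h := mul_left_cancel₀ (ne_of_gt hτZ2) e1
    linarith
  exact ⟨hτ, hφZ, hφU, hρ⟩
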